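/- arXiv:2106.11937 — 2 statements merged into one kernel-verified Lean document; each statement's English description precedes it below -/
import Mathlib

section
/- Let X be a metric space, α ≥ 0, F ⊆ X, and f : X → ℝ a 1-Lipschitz map. Then ∫*_ℝ H^α(F ∩ f⁻¹(y)) dy ≤ H^{α+1}(F), where H^s denotes s-dimensional Hausdorff measure on X and ∫* the upper (outer) integral. -/
open MeasureTheory ENNReal

/-- Upper (outer) integral over ℝ: infimum of ∫ h over measurable h with g ≤ h a.e. -/
noncomputable def upperIntegral (g : ℝ → ENNReal) : ENNReal :=
  ⨅ (h : ℝ → ENNReal) (_ : Measurable h) (_ : ∀ᵐ y : ℝ, g y ≤ h y), ∫⁻ y, h y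

/-- Eilenberg's co-area inequality: for any metric space X, α ≥ 0, F ⊆ X and
1-Lipschitz f : X → ℝ, the upper integral of y ↦ H^α(F ∩ f⁻¹(y)) is at most H^{α+1}(F). -/
theorem coarea_inequality {X : Type*} [EMetricSpace X] [MeasurableSpace X] [BorelSpace X]
    (F : Set X) (f : X → ℝ) (hf : LipschitzWith 1 f) (α : ℝ) (hα : 0 ≤ α) :
    upperIntegral (fun y => μH[α] (F ∩ f ⁻¹' {y})) ≤ μH[α + 1] F := by
  classical
  by_cases hF : μH[α + 1] F = ⊤
  · rw [hF]; exact le_top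
  -- the scale sequence
  set e : ℕ → ℝ≥0∞ := fun n => ((n : ℝ≥0∞) + 1)⁻¹ with he
  have he_pos : ∀ n, 0 < e n := fun n =>
    ENNReal.inv_pos.2 (by simp [ENNReal.add_ne_top])
  have he_ne : ∀ n, e n ≠ 0 := fun n => (he_pos n).ne'
  -- choose good covers at each scale
  have key : ∀ n : ℕ, ∃ t : ℕ → Set X, (F ⊆ ⋃ i, t i) ∧ (∀ i, EMetric.diam (t i) ≤ e n) ∧
      (∑' i, ⨆ _ : (t i).Nonempty, EMetric.diam (t i) ^ (α + 1)) ≤ μH[α + 1] F + e n := by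
    intro n
    have h1 : (⨅ (t : ℕ → Set X) (_ : F ⊆ ⋃ i, t i) (_ : ∀ i, EMetric.diam (t i) ≤ e n),
        ∑' i, ⨆ _ : (t i).Nonempty, EMetric.diam (t i) ^ (α + 1)) ≤ μH[α + 1] F := by
      rw [Measure.hausdorffMeasure_apply]
      exact le_iSup₂_of_le (e n) (he_pos n) le_rfl
    have h2 := h1.trans_lt (ENNReal.lt_add_right hF (he_ne n))
    simp only [iInf_lt_iff] at h2
    obtain ⟨t, ht1, ht2, hlt⟩ := h2
    exact ⟨t, ht1, ht2, hlt.le⟩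
  choose t ht_cov ht_diam ht_sum using key
  -- the approximating measurable functions
  set hfun : ℕ → ℝ → ℝ≥0∞ := fun n y => ∑' i,
      (closure (f '' t n i)).indicator
        (fun _ => ⨆ _ : (t n i).Nonempty, EMetric.diam (t n i) ^ α) y with hhfun
  have hfun_meas : ∀ n, Measurable (hfun n) := fun n =>
    Measurable.ennreal_tsum fun i =>
      measurable_const.indicator isClosed_closure.measurableSet
  set H : ℝ → ℝ≥0∞ := fun y => Filter.liminf (fun n => hfun n y) Filter.atTop with hH
  have H_meas : Measurable H := Measurable.liminf hfun_meas
  -- pointwise lower bound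
  have H_ge : ∀ y : ℝ, μH[α] (F ∩ f ⁻¹' {y}) ≤ H y := by
    intro y
    rw [Measure.hausdorffMeasure_apply]
    refine iSup₂_le fun r hr => ?_
    refine Filter.le_liminf_of_le (by isBoundedDefault) ?_
    obtain ⟨N, hN⟩ := ENNReal.exists_inv_nat_lt hr.ne'
    filter_upwards [Filter.eventually_ge_atTop N] with n hn
    have hen : e n ≤ r := by
      refine le_trans ?_ hN.le
      exact ENNReal.inv_le_inv' (by exact_mod_cast le_trans hn (Nat.le_succ n))
    -- cover of the fiber
    set u : ℕ → Set X := fun i => if y ∈ closure (f '' t n i) then t n i else ∅ with hu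
    have hcov : F ∩ f ⁻¹' {y} ⊆ ⋃ i, u i := by
      rintro x ⟨hxF, hxy⟩
      obtain ⟨i, hi⟩ := Set.mem_iUnion.1 (ht_cov n hxF)
      refine Set.mem_iUnion.2 ⟨i, ?_⟩
      have hyc : y ∈ closure (f '' t n i) :=
        subset_closure ⟨x, hi, hxy⟩
      simp only [hu, if_pos hyc]; exact hi
    have hd : ∀ i, EMetric.diam (u i) ≤ r := by
      intro i
      simp only [hu]
      split
      · exact (ht_diam n i).trans hen
      · exact Metric.ediam_empty.le.trans zero_le
    refine le_trans (iInf₂_le_of_le u hcov (iInf_le_of_le hd le_rfl))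
      (ENNReal.tsum_le_tsum fun i => ?_)
    by_cases hyc : y ∈ closure (f '' t n i)
    · simp only [hu, if_pos hyc, Set.indicator_of_mem hyc]
      exact le_rfl
    · simp only [hu, if_neg hyc, Set.indicator_of_notMem hyc]
      simp [Set.not_nonempty_empty]
  -- integral bound
  have Hint : ∫⁻ y, H y ≤ μH[α + 1] F := by
    have fatou := lintegral_liminf_le hfun_meas (μ := volume) (u := Filter.atTop)
    refine fatou.trans ?_
    have step : ∀ n, ∫⁻ y, hfun n y ≤ μH[α + 1] F + e n := by
      intro n
      have : ∫⁻ y, hfun n y =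
          ∑' i, (⨆ _ : (t n i).Nonempty, EMetric.diam (t n i) ^ α) *
            volume (closure (f '' t n i)) := by
        rw [hhfun]
        rw [lintegral_tsum fun i =>
          (measurable_const.indicator isClosed_closure.measurableSet).aemeasurable]
        exact tsum_congr fun i =>
          lintegral_indicator_const isClosed_closure.measurableSet _
      rw [this]
      refine le_trans ?_ (ht_sum n)
      refine ENNReal.tsum_le_tsum fun i => ?_
      by_cases hne : (t n i).Nonempty
      · simp only [hne, iSup_pos]
        have hvol : volume (closure (f '' t n i)) ≤ EMetric.diam (t n i) := by
          refine (Real.volume_le_diam _).trans ?_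
          rw [EMetric.diam_closure]
          have := hf.ediam_image_le (t n i); simp at this; exact this
        calc EMetric.diam (t n i) ^ α * volume (closure (f '' t n i))
            ≤ EMetric.diam (t n i) ^ α * EMetric.diam (t n i) ^ (1 : ℝ) := by
              gcongr
              rwa [ENNReal.rpow_one]
          _ = EMetric.diam (t n i) ^ (α + 1) :=
              (ENNReal.rpow_add_of_nonneg α 1 hα zero_le_one).symm
      · simp [iSup_neg hne]
    calc Filter.liminf (fun n => ∫⁻ y, hfun n y) Filter.atTop
        ≤ Filter.liminf (fun n => μH[α + 1] F + e n) Filter.atTop :=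
          Filter.liminf_le_liminf (Filter.Eventually.of_forall step)
      _ = μH[α + 1] F := by
          refine Filter.Tendsto.liminf_eq ?_
          have h0 : Filter.Tendsto e Filter.atTop (nhds 0) := by
            have he2 : e = fun n => ((n + 1 : ℕ) : ℝ≥0∞)⁻¹ := by
              funext n; push_cast [he]; ring_nf
            rw [he2]
            exact ENNReal.tendsto_inv_nat_nhds_zero.comp
              (Filter.tendsto_add_atTop_nat 1)
          simpa using (Filter.Tendsto.add tendsto_const_nhds h0 :
            Filter.Tendsto (fun n => μH[α + 1] F + e n) Filter.atTop
              (nhds (μH[α + 1] F + 0)))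
  calc upperIntegral (fun y => μH[α] (F ∩ f ⁻¹' {y}))
      ≤ ∫⁻ y, H y :=
        iInf_le_of_le H (iInf_le_of_le H_meas
          (iInf_le_of_le (Filter.Eventually.of_forall H_ge) le_rfl))
    _ ≤ μH[α + 1] F := Hint
end

section
/- Let X be a metric space, F ⊆ X, f : X → ℝ 1-Lipschitz, α > 0, and [a,b] ⊂ ℝ with a < b. If H^α(F ∩ f⁻¹(y)) = ∞ for every y ∈ [a,b], then H^{α+1}(F) = ∞; consequently the Hausdorff dimension of F is at least α + 1. -/
open MeasureTheory
open scoped ENNReal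

/-- Pre-Hausdorff measure at scale `r`: infimum over countable covers by sets of
diameter at most `r`. This matches the formula in `hausdorffMeasure_apply`. -/
noncomputable def preH {X : Type*} [EMetricSpace X] (d : ℝ) (r : ℝ≥0∞) (s : Set X) : ℝ≥0∞ :=
  ⨅ (t : ℕ → Set X) (_ : s ⊆ ⋃ n, t n) (_ : ∀ n, EMetric.diam (t n) ≤ r),
    ∑' n, ⨆ _ : (t n).Nonempty, EMetric.diam (t n) ^ d

lemma preH_anti {X : Type*} [EMetricSpace X] (d : ℝ) {r r' : ℝ≥0∞} (h : r ≤ r') (s : Set X) :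
    preH d r' s ≤ preH d r s := by
  refine le_iInf fun t => le_iInf fun hcov => le_iInf fun hdiam => ?_
  exact iInf_le_of_le t <| iInf_le_of_le hcov <|
    iInf_le_of_le (fun n => (hdiam n).trans h) le_rfl

lemma hausdorffMeasure_eq_iSup_preH {X : Type*} [EMetricSpace X] [MeasurableSpace X]
    [BorelSpace X] (d : ℝ) (s : Set X) :
    μH[d] s = ⨆ (r : ℝ≥0∞) (_ : 0 < r), preH d r s :=
  MeasureTheory.Measure.hausdorffMeasure_apply d s

lemma preH_le_hausdorffMeasure {X : Type*} [EMetricSpace X] [MeasurableSpace X]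
    [BorelSpace X] (d : ℝ) {r : ℝ≥0∞} (hr : 0 < r) (s : Set X) :
    preH d r s ≤ μH[d] s := by
  rw [hausdorffMeasure_eq_iSup_preH]
  exact le_iSup₂ (f := fun r (_ : 0 < r) => preH d r s) r hr

set_option maxHeartbeats 1000000 in
/-- If f : X → ℝ is 1-Lipschitz, α > 0, and H^α(F ∩ f⁻¹(y)) = ∞ for every y in a
nondegenerate interval [a,b], then H^{α+1}(F) = ∞ and dim F ≥ α + 1. -/
theorem infinite_slices_lower_bound {X : Type*} [EMetricSpace X] [MeasurableSpace X]
    [BorelSpace X] (F : Set X) (f : X → ℝ) (hf : LipschitzWith 1 f)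
    (α : ℝ) (hα : 0 < α) (a b : ℝ) (hab : a < b)
    (hslice : ∀ y ∈ Set.Icc a b, μH[α] (F ∩ f ⁻¹' {y}) = ∞) :
    μH[α + 1] F = ∞ ∧ ENNReal.ofReal (α + 1) ≤ dimH F := by
  have hmain : μH[α + 1] F = ∞ := by
    by_contra hC
    set C : ℝ≥0∞ := μH[α + 1] F with hCdef
    set v : ℝ≥0∞ := ENNReal.ofReal (b - a) with hvdef
    have hv0 : v ≠ 0 := by
      simp [hvdef, ENNReal.ofReal_eq_zero, sub_pos.2 hab, not_le.2 (sub_pos.2 hab)]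
    have hvtop : v ≠ ∞ := ENNReal.ofReal_ne_top
    set M : ℝ≥0∞ := (C + 2) / v with hMdef
    have hMtop : M ≠ ∞ :=
      (ENNReal.div_lt_top (by simp [ENNReal.add_ne_top, hC]) hv0).ne
    set A : ℕ → Set ℝ := fun n =>
      {y ∈ Set.Icc a b | M ≤ preH α ((n : ℝ≥0∞) + 1)⁻¹ (F ∩ f ⁻¹' {y})} with hAdef
    -- A is monotone
    have hAmono : Monotone A := by
      intro m n hmn y hy
      refine ⟨hy.1, le_trans hy.2 (preH_anti α ?_ _)⟩
      gcongr
    -- union of A is Icc a b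
    have hAunion : (⋃ n, A n) = Set.Icc a b := by
      apply Set.Subset.antisymm
      · exact Set.iUnion_subset fun n y hy => hy.1
      · intro y hy
        have h1 : μH[α] (F ∩ f ⁻¹' {y}) = ∞ := hslice y hy
        rw [hausdorffMeasure_eq_iSup_preH] at h1
        have h2 : M < ⨆ (r : ℝ≥0∞) (_ : 0 < r), preH α r (F ∩ f ⁻¹' {y}) := by
          rw [h1]; exact hMtop.lt_top
        rw [lt_iSup_iff] at h2
        obtain ⟨r, h2⟩ := h2
        rw [lt_iSup_iff] at h2
        obtain ⟨hr0, h2⟩ := h2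
        obtain ⟨n, hn⟩ := ENNReal.exists_inv_nat_lt hr0.ne'
        refine Set.mem_iUnion.2 ⟨n, hy, le_trans h2.le (preH_anti α ?_ _)⟩
        refine le_trans ?_ hn.le
        exact ENNReal.inv_le_inv.2 (by exact_mod_cast Nat.le_succ n)
    -- key bound
    have hkey : ∀ n : ℕ, M * volume (A n) ≤ C + 1 := by
      intro n
      set δ : ℝ≥0∞ := ((n : ℝ≥0∞) + 1)⁻¹ with hδdef
      have hδ0 : 0 < δ := ENNReal.inv_pos.2 (by simp)
      have hδtop : δ ≠ ∞ := by
        simp [hδdef]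
      -- choose a good cover of F
      have h3 : preH (α + 1) δ F < C + 1 := by
        refine lt_of_le_of_lt (preH_le_hausdorffMeasure _ hδ0 F) ?_
        exact ENNReal.lt_add_right hC one_ne_zero
      rw [preH, iInf_lt_iff] at h3
      obtain ⟨t, h3⟩ := h3
      rw [iInf_lt_iff] at h3
      obtain ⟨hcov, h3⟩ := h3
      rw [iInf_lt_iff] at h3
      obtain ⟨hdiam, hsum⟩ := h3
      -- measurable hulls of the images
      set I : ℕ → Set ℝ := fun m => toMeasurable volume (f '' t m) with hIdef
      have hImeas : ∀ m, MeasurableSet (I m) := fun m => measurableSet_toMeasurable _ _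
      have hIvol : ∀ m, volume (I m) ≤ EMetric.diam (t m) := by
        intro m
        rw [hIdef]
        calc volume (toMeasurable volume (f '' t m)) = volume (f '' t m) :=
              measure_toMeasurable _
          _ ≤ EMetric.diam (f '' t m) := Real.volume_le_diam _
          _ ≤ 1 * EMetric.diam (t m) := hf.ediam_image_le _
          _ = EMetric.diam (t m) := one_mul _
      -- the majorant g
      set c : ℕ → ℝ≥0∞ := fun m => ⨆ _ : (t m).Nonempty, EMetric.diam (t m) ^ α with hcdef
      set g : ℝ → ℝ≥0∞ := fun y => ∑' m, (I m).indicator (fun _ => c m) y with hgdef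
      have hgmeas : Measurable g := by
        apply Measurable.ennreal_tsum
        exact fun m => measurable_const.indicator (hImeas m)
      -- slices are dominated by g
      have hAle : ∀ y ∈ A n, M ≤ g y := by
        intro y hy
        refine le_trans hy.2 ?_
        -- build a cover of the slice
        classical
        set s : ℕ → Set X := fun m => if y ∈ I m then t m else ∅ with hsdef
        have hscov : F ∩ f ⁻¹' {y} ⊆ ⋃ m, s m := by
          intro x hx
          obtain ⟨m, hm⟩ := Set.mem_iUnion.1 (hcov hx.1)
          have hyI : y ∈ I m := by
            have : y ∈ f '' t m := ⟨x, hm, hx.2⟩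
            exact subset_toMeasurable _ _ this
          exact Set.mem_iUnion.2 ⟨m, by simp [hsdef, hyI, hm]⟩
        have hsdiam : ∀ m, EMetric.diam (s m) ≤ δ := by
          intro m
          by_cases hyI : y ∈ I m <;> simp [hsdef, hyI, hdiam m]
          exact (Metric.ediam_empty (X := X)).trans_le (zero_le)
        refine le_trans (iInf_le_of_le s <| iInf_le_of_le hscov <|
          iInf_le_of_le hsdiam le_rfl) ?_
        show (∑' m, ⨆ _ : (s m).Nonempty, EMetric.diam (s m) ^ α) ≤
          ∑' m, (I m).indicator (fun _ => c m) y
        refine ENNReal.tsum_le_tsum fun m => ?_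
        by_cases hyI : y ∈ I m
        · simp [hsdef, hyI, Set.indicator_of_mem hyI, hcdef]
        · simp [hsdef, hyI, Set.indicator_of_notMem hyI]
      -- Chebyshev
      have hsub : A n ⊆ {y | M ≤ g y} ∩ Set.Icc a b :=
        fun y hy => ⟨hAle y hy, hy.1⟩
      have hcheb : M * volume (A n) ≤ ∫⁻ y, g y ∂(volume.restrict (Set.Icc a b)) := by
        calc M * volume (A n)
            ≤ M * volume.restrict (Set.Icc a b) {y | M ≤ g y} := by
              refine mul_le_mul_right ?_ M
              rw [Measure.restrict_apply (measurableSet_le measurable_const hgmeas)]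
              exact measure_mono hsub
          _ ≤ _ := mul_meas_ge_le_lintegral hgmeas M
      -- compute the integral of g
      have hint : ∫⁻ y, g y ∂(volume.restrict (Set.Icc a b)) ≤
          ∑' m, ⨆ _ : (t m).Nonempty, EMetric.diam (t m) ^ (α + 1) := by
        calc ∫⁻ y, g y ∂(volume.restrict (Set.Icc a b))
            ≤ ∫⁻ y, g y ∂volume := lintegral_mono' Measure.restrict_le_self le_rfl
          _ = ∑' m, c m * volume (I m) := by
              rw [hgdef]
              rw [lintegral_tsum fun m =>
                (measurable_const.indicator (hImeas m)).aemeasurable]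
              congr 1
              ext m
              rw [lintegral_indicator_const (hImeas m)]
          _ ≤ ∑' m, ⨆ _ : (t m).Nonempty, EMetric.diam (t m) ^ (α + 1) := by
              refine ENNReal.tsum_le_tsum fun m => ?_
              rcases Set.eq_empty_or_nonempty (t m) with he | hne
              · simp [hcdef, he]
              · simp only [hcdef, iSup_pos hne]
                calc EMetric.diam (t m) ^ α * volume (I m)
                    ≤ EMetric.diam (t m) ^ α * EMetric.diam (t m) := by
                      gcongr
                      exact hIvol m
                  _ = EMetric.diam (t m) ^ (α + 1) := by
                      rcases eq_or_ne (EMetric.diam (t m)) 0 with h0 | h0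
                      · rw [h0, ENNReal.zero_rpow_of_pos hα,
                          ENNReal.zero_rpow_of_pos (by linarith), zero_mul]
                      · have htop : EMetric.diam (t m) ≠ ∞ :=
                          ne_top_of_le_ne_top hδtop (hdiam m)
                        rw [ENNReal.rpow_add _ _ h0 htop, ENNReal.rpow_one]
      exact le_trans hcheb (le_trans hint hsum.le)
    -- continuity from below
    have hvsup : v = ⨆ n, volume (A n) := by
      rw [hvdef, ← Real.volume_Icc, ← hAunion]
      exact Directed.measure_iUnion hAmono.directed_le
    have hfinal : M * v ≤ C + 1 := by
      rw [hvsup, ENNReal.mul_iSup]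
      exact iSup_le hkey
    rw [hMdef, ENNReal.div_mul_cancel hv0 hvtop] at hfinal
    have : (2 : ℝ≥0∞) ≤ 1 := (ENNReal.add_le_add_iff_left hC).1 hfinal
    norm_num at this
  refine ⟨hmain, ?_⟩
  have h0 : (0:ℝ) ≤ α + 1 := by linarith
  have h2 : μH[((α + 1).toNNReal : ℝ)] F = ∞ := by
    rw [Real.coe_toNNReal _ h0]; exact hmain
  have h3 := le_dimH_of_hausdorffMeasure_eq_top h2
  rw [ENNReal.ofReal]
  exact h3
end
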